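/- (Pilot-power update of Theorem 2, eq. (18).) Fix nonnegative u = (u_{l,k}), nonnegative w = (w_{l,k}), and nonnegative data square-root powers ρ, and suppose η̂_{l,k}(u,w,ρ) > 0 for every l and k ∈ A_l. Then the map ρ̂ ↦ Σ_{l=1}^L Σ_{k∈A_l} w_{l,k} e_{l,k}(u_{l,k}, ρ̂, ρ), restricted to the box {ρ̂ : 0 ≤ ρ̂_{l,k} ≤ √P_{l,k} for all l, k ∈ A_l}, attains its global minimum at the point ρ̂* with coordinates ρ̂*_{l,k} = min( √(M K) ρ_{l,k} u_{l,k} w_{l,k} β_{l,k}^l / η̂_{l,k}(u,w,ρ), √P_{l,k} ). -/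

import Mathlib

open Finset Filter

noncomputable section

/-- `Pset A k` : the set of cells in which user index `k` is active,
i.e. `P_k = {i : k ∈ A_i}`. -/
def Pset {L K : ℕ} (A : Fin L → Finset (Fin K)) (k : Fin K) : Finset (Fin L) :=
  Finset.univ.filter fun i => k ∈ A i

/-- The SINR denominator `D_{l,k}` for pilot powers `phat` and data powers `p`. -/
def Dterm {L K : ℕ} (M : ℕ) (σ2 : ℝ) (A : Fin L → Finset (Fin K))
    (β : Fin L → Fin K → Fin L → ℝ) (phat p : Fin L → Fin K → ℝ)
    (l : Fin L) (k : Fin K) : ℝ :=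
  (M : ℝ) * (K : ℝ) * ∑ i ∈ (Pset A k).erase l, p i k * phat i k * β i k l ^ 2 +
    ((K : ℝ) * ∑ i ∈ Pset A k, phat i k * β i k l + σ2) *
      ((∑ i, ∑ t ∈ A i, p i t * β i t l) + σ2)

/-- `SINR_{l,k}` for pilot powers `phat` and data powers `p`. -/
def SINR {L K : ℕ} (M : ℕ) (σ2 : ℝ) (A : Fin L → Finset (Fin K))
    (β : Fin L → Fin K → Fin L → ℝ) (phat p : Fin L → Fin K → ℝ)
    (l : Fin L) (k : Fin K) : ℝ :=
  (M : ℝ) * (K : ℝ) * p l k * phat l k * β l k l ^ 2 / Dterm M σ2 A β phat p l k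

/-- `SINR_{l,k}(ρ̂, ρ)` : the SINR evaluated at squared square-root powers. -/
def SINRsq {L K : ℕ} (M : ℕ) (σ2 : ℝ) (A : Fin L → Finset (Fin K))
    (β : Fin L → Fin K → Fin L → ℝ) (rhat rho : Fin L → Fin K → ℝ)
    (l : Fin L) (k : Fin K) : ℝ :=
  SINR M σ2 A β (fun i t => rhat i t ^ 2) (fun i t => rho i t ^ 2) l k

/-- The mean square error `e_{l,k}(u, ρ̂, ρ)`. -/
def eMSE {L K : ℕ} (M : ℕ) (σ2 : ℝ) (A : Fin L → Finset (Fin K))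
    (β : Fin L → Fin K → Fin L → ℝ) (u : ℝ) (rhat rho : Fin L → Fin K → ℝ)
    (l : Fin L) (k : Fin K) : ℝ :=
  (M : ℝ) * (K : ℝ) * u ^ 2 * ∑ i ∈ Pset A k, rho i k ^ 2 * rhat i k ^ 2 * β i k l ^ 2
    - 2 * Real.sqrt ((M : ℝ) * (K : ℝ)) * rho l k * rhat l k * u * β l k l
    + u ^ 2 * ((K : ℝ) * ∑ i ∈ Pset A k, rhat i k ^ 2 * β i k l + σ2) *
        ((∑ i, ∑ t ∈ A i, rho i t ^ 2 * β i t l) + σ2)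
    + 1

/-- The leading (quadratic in `u`) coefficient `A_{l,k}(ρ̂, ρ)` of `e_{l,k}`. -/
def Acoef {L K : ℕ} (M : ℕ) (σ2 : ℝ) (A : Fin L → Finset (Fin K))
    (β : Fin L → Fin K → Fin L → ℝ) (rhat rho : Fin L → Fin K → ℝ)
    (l : Fin L) (k : Fin K) : ℝ :=
  (M : ℝ) * (K : ℝ) * ∑ i ∈ Pset A k, rho i k ^ 2 * rhat i k ^ 2 * β i k l ^ 2 +
    ((K : ℝ) * ∑ i ∈ Pset A k, rhat i k ^ 2 * β i k l + σ2) *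
      ((∑ i, ∑ t ∈ A i, rho i t ^ 2 * β i t l) + σ2)

/-- The optimal beamforming coefficient `u^opt_{l,k}(ρ̂, ρ)`. -/
def uopt {L K : ℕ} (M : ℕ) (σ2 : ℝ) (A : Fin L → Finset (Fin K))
    (β : Fin L → Fin K → Fin L → ℝ) (rhat rho : Fin L → Fin K → ℝ)
    (l : Fin L) (k : Fin K) : ℝ :=
  Real.sqrt ((M : ℝ) * (K : ℝ)) * rho l k * rhat l k * β l k l /
    Acoef M σ2 A β rhat rho l k

/-- The weighted-MMSE objective `F(u, w, ρ̂, ρ)`. -/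
def Fobj {L K : ℕ} (M : ℕ) (σ2 : ℝ) (A : Fin L → Finset (Fin K))
    (β : Fin L → Fin K → Fin L → ℝ) (u w rhat rho : Fin L → Fin K → ℝ) : ℝ :=
  ∑ l, ∑ k ∈ A l, (w l k * eMSE M σ2 A β (u l k) rhat rho l k - Real.log (w l k))

/-- The pilot-power quadratic coefficient `η̂_{l,k}(u, w, ρ)`. -/
def etaHat {L K : ℕ} (M : ℕ) (σ2 : ℝ) (A : Fin L → Finset (Fin K))
    (β : Fin L → Fin K → Fin L → ℝ) (u w rho : Fin L → Fin K → ℝ)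
    (l : Fin L) (k : Fin K) : ℝ :=
  rho l k ^ 2 * (M : ℝ) * (K : ℝ) * ∑ i ∈ Pset A k, w i k * u i k ^ 2 * β l k i ^ 2 +
    (K : ℝ) * ∑ j ∈ Pset A k, w j k * u j k ^ 2 * β l k j *
      ((∑ i, ∑ t ∈ A i, rho i t ^ 2 * β i t j) + σ2)

/-- The data-power quadratic coefficient `η_{l,k}(u, w, ρ̂)`. -/
def etaData {L K : ℕ} (M : ℕ) (σ2 : ℝ) (A : Fin L → Finset (Fin K))
    (β : Fin L → Fin K → Fin L → ℝ) (u w rhat : Fin L → Fin K → ℝ)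
    (l : Fin L) (k : Fin K) : ℝ :=
  rhat l k ^ 2 * (M : ℝ) * (K : ℝ) * ∑ i ∈ Pset A k, w i k * u i k ^ 2 * β l k i ^ 2 +
    ∑ i, ∑ t ∈ A i, w i t * u i t ^ 2 * β l k i *
      ((K : ℝ) * ∑ j ∈ Pset A t, rhat j t ^ 2 * β j t i + σ2)

/-- Auxiliary summand: the coupling term between pairs. -/
def fAux {L K : ℕ} (M : ℕ) (σ2 : ℝ) (A : Fin L → Finset (Fin K))
    (β : Fin L → Fin K → Fin L → ℝ) (u w rho rhat : Fin L → Fin K → ℝ)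
    (l : Fin L) (k : Fin K) (i : Fin L) : ℝ :=
  w l k * u l k ^ 2 * rhat i k ^ 2 *
    ((M : ℝ) * (K : ℝ) * rho i k ^ 2 * β i k l ^ 2 +
      (K : ℝ) * β i k l * ((∑ a, ∑ t ∈ A a, rho a t ^ 2 * β a t l) + σ2))

lemma tripleswap {L K : ℕ} (A : Fin L → Finset (Fin K)) (f : Fin L → Fin K → Fin L → ℝ) :
    ∑ l, ∑ k ∈ A l, ∑ i ∈ Pset A k, f l k i
      = ∑ l, ∑ k ∈ A l, ∑ i ∈ Pset A k, f i k l := by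
  have h : ∀ g : Fin L → Fin K → Fin L → ℝ,
      ∑ l, ∑ k ∈ A l, ∑ i ∈ Pset A k, g l k i
        = ∑ l : Fin L, ∑ k : Fin K, ∑ i : Fin L,
            if k ∈ A l then (if k ∈ A i then g l k i else 0) else 0 := by
    intro g
    refine Finset.sum_congr rfl fun l _ => ?_
    have e : ∀ F : Fin K → ℝ,
        ∑ k ∈ A l, F k = ∑ k : Fin K, if k ∈ A l then F k else 0 := by
      intro F
      rw [Finset.sum_ite_mem, Finset.univ_inter]
    rw [e]
    refine Finset.sum_congr rfl fun k _ => ?_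
    by_cases hk : k ∈ A l
    · simp only [hk, if_true, Pset, Finset.sum_filter]
    · simp [hk]
  rw [h, h]
  calc ∑ l : Fin L, ∑ k : Fin K, ∑ i : Fin L,
          (if k ∈ A l then (if k ∈ A i then f l k i else 0) else 0)
      = ∑ k : Fin K, ∑ l : Fin L, ∑ i : Fin L,
          (if k ∈ A l then (if k ∈ A i then f l k i else 0) else 0) := Finset.sum_comm
    _ = ∑ k : Fin K, ∑ i : Fin L, ∑ l : Fin L,
          (if k ∈ A l then (if k ∈ A i then f l k i else 0) else 0) :=
        Finset.sum_congr rfl fun k _ => Finset.sum_comm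
    _ = ∑ i : Fin L, ∑ k : Fin K, ∑ l : Fin L,
          (if k ∈ A l then (if k ∈ A i then f l k i else 0) else 0) := Finset.sum_comm
    _ = ∑ l : Fin L, ∑ k : Fin K, ∑ i : Fin L,
          (if k ∈ A l then (if k ∈ A i then f i k l else 0) else 0) := by
        refine Finset.sum_congr rfl fun a _ => Finset.sum_congr rfl fun k _ =>
          Finset.sum_congr rfl fun b _ => ?_
        by_cases h1 : k ∈ A a <;> by_cases h2 : k ∈ A b <;> simp [h1, h2]

lemma wE_expand {L K : ℕ} (M : ℕ) (σ2 : ℝ) (A : Fin L → Finset (Fin K))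
    (β : Fin L → Fin K → Fin L → ℝ) (u w rho rhat : Fin L → Fin K → ℝ)
    (l : Fin L) (k : Fin K) :
    w l k * eMSE M σ2 A β (u l k) rhat rho l k
      = (∑ i ∈ Pset A k, fAux M σ2 A β u w rho rhat l k i)
        + (- (2 * (Real.sqrt ((M : ℝ) * (K : ℝ)) * rho l k * u l k * w l k * β l k l)
              * rhat l k)
            + w l k * (u l k ^ 2 * σ2 *
                ((∑ a, ∑ t ∈ A a, rho a t ^ 2 * β a t l) + σ2) + 1)) := by
  have h1 : ∑ i ∈ Pset A k, fAux M σ2 A β u w rho rhat l k i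
      = w l k * u l k ^ 2 * ((M : ℝ) * (K : ℝ)) *
          (∑ i ∈ Pset A k, rho i k ^ 2 * rhat i k ^ 2 * β i k l ^ 2)
        + w l k * u l k ^ 2 * (K : ℝ) *
            ((∑ a, ∑ t ∈ A a, rho a t ^ 2 * β a t l) + σ2) *
            (∑ i ∈ Pset A k, rhat i k ^ 2 * β i k l) := by
    rw [Finset.mul_sum, Finset.mul_sum, ← Finset.sum_add_distrib]
    exact Finset.sum_congr rfl fun i _ => by simp only [fAux]; ring
  rw [h1, eMSE]
  ring

lemma eta_mul {L K : ℕ} (M : ℕ) (σ2 : ℝ) (A : Fin L → Finset (Fin K))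
    (β : Fin L → Fin K → Fin L → ℝ) (u w rho rhat : Fin L → Fin K → ℝ)
    (l : Fin L) (k : Fin K) :
    etaHat M σ2 A β u w rho l k * rhat l k ^ 2
      = ∑ i ∈ Pset A k, fAux M σ2 A β u w rho rhat i k l := by
  rw [etaHat]
  simp only [Finset.mul_sum]
  rw [add_mul, Finset.sum_mul, Finset.sum_mul, ← Finset.sum_add_distrib]
  exact Finset.sum_congr rfl fun i _ => by simp only [fAux]; ring

lemma sum_identity {L K : ℕ} (M : ℕ) (σ2 : ℝ) (A : Fin L → Finset (Fin K))
    (β : Fin L → Fin K → Fin L → ℝ) (u w rho rhat : Fin L → Fin K → ℝ) :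
    ∑ l, ∑ k ∈ A l, w l k * eMSE M σ2 A β (u l k) rhat rho l k
      = (∑ l, ∑ k ∈ A l,
          (etaHat M σ2 A β u w rho l k * rhat l k ^ 2
            - 2 * (Real.sqrt ((M : ℝ) * (K : ℝ)) * rho l k * u l k * w l k * β l k l)
                * rhat l k))
        + ∑ l, ∑ k ∈ A l, w l k * (u l k ^ 2 * σ2 *
            ((∑ a, ∑ t ∈ A a, rho a t ^ 2 * β a t l) + σ2) + 1) := by
  calc ∑ l, ∑ k ∈ A l, w l k * eMSE M σ2 A β (u l k) rhat rho l k
      = ∑ l, ∑ k ∈ A l, ((∑ i ∈ Pset A k, fAux M σ2 A β u w rho rhat l k i)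
          + (- (2 * (Real.sqrt ((M : ℝ) * (K : ℝ)) * rho l k * u l k * w l k * β l k l)
                * rhat l k)
              + w l k * (u l k ^ 2 * σ2 *
                  ((∑ a, ∑ t ∈ A a, rho a t ^ 2 * β a t l) + σ2) + 1))) :=
        Finset.sum_congr rfl fun l _ => Finset.sum_congr rfl fun k _ =>
          wE_expand M σ2 A β u w rho rhat l k
    _ = ∑ l, ∑ k ∈ A l, ((∑ i ∈ Pset A k, fAux M σ2 A β u w rho rhat i k l)
          + (- (2 * (Real.sqrt ((M : ℝ) * (K : ℝ)) * rho l k * u l k * w l k * β l k l)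
                * rhat l k)
              + w l k * (u l k ^ 2 * σ2 *
                  ((∑ a, ∑ t ∈ A a, rho a t ^ 2 * β a t l) + σ2) + 1))) := by
        simp only [Finset.sum_add_distrib]
        rw [tripleswap A (fAux M σ2 A β u w rho rhat)]
    _ = ∑ l, ∑ k ∈ A l, (etaHat M σ2 A β u w rho l k * rhat l k ^ 2
          + (- (2 * (Real.sqrt ((M : ℝ) * (K : ℝ)) * rho l k * u l k * w l k * β l k l)
                * rhat l k)
              + w l k * (u l k ^ 2 * σ2 *
                  ((∑ a, ∑ t ∈ A a, rho a t ^ 2 * β a t l) + σ2) + 1))) :=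
        Finset.sum_congr rfl fun l _ => Finset.sum_congr rfl fun k _ => by
          rw [eta_mul M σ2 A β u w rho rhat l k]
    _ = _ := by
        simp only [← Finset.sum_add_distrib]
        exact Finset.sum_congr rfl fun l _ => Finset.sum_congr rfl fun k _ => by ring

/-- Pointwise quadratic minimization on an interval. -/
lemma quad_min (η c P x : ℝ) (hη : 0 < η) (hc : 0 ≤ c) (hP : 0 ≤ P)
    (hx1 : 0 ≤ x) (hx2 : x ≤ P) :
    η * (min (c / η) P) ^ 2 - 2 * c * (min (c / η) P)
      ≤ η * x ^ 2 - 2 * c * x := by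
  rcases le_total (c / η) P with h | h
  · rw [min_eq_left h]
    have e1 : η * (c / η) ^ 2 - 2 * c * (c / η) = -(c ^ 2) / η := by
      field_simp; ring
    rw [e1, div_le_iff₀ hη]
    nlinarith [sq_nonneg (η * x - c)]
  · rw [min_eq_right h]
    have hPc : P * η ≤ c := by rwa [le_div_iff₀ hη] at h
    have hxc : η * x ≤ c := by nlinarith
    nlinarith [mul_nonneg (sub_nonneg.2 hx2)
      (by nlinarith : (0:ℝ) ≤ 2 * c - η * x - η * P)]

/-- pilot-power update, eq. (18): for nonnegative `u`, `w`, `ρ` with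
`η̂_{l,k}(u,w,ρ) > 0` on all active pairs, the map
`ρ̂ ↦ Σ_l Σ_{k∈A_l} w_{l,k} e_{l,k}(u_{l,k}, ρ̂, ρ)` restricted to the box
`0 ≤ ρ̂_{l,k} ≤ √P_{l,k}` attains its global minimum at
`ρ̂*_{l,k} = min(√(MK) ρ_{l,k} u_{l,k} w_{l,k} β_{l,k}^l / η̂_{l,k}, √P_{l,k})`. -/
theorem stmt5 {L K : ℕ} (M : ℕ) (hL : 0 < L) (hK : 0 < K) (hM : 0 < M)
    (σ2 : ℝ) (hσ : 0 < σ2)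
    (A : Fin L → Finset (Fin K))
    (β : Fin L → Fin K → Fin L → ℝ) (hβ : ∀ i t l, 0 ≤ β i t l)
    (Pm : Fin L → Fin K → ℝ) (hPm : ∀ l k, 0 ≤ Pm l k)
    (u w rho : Fin L → Fin K → ℝ)
    (hu : ∀ i t, 0 ≤ u i t) (hw : ∀ i t, 0 ≤ w i t) (hrho : ∀ i t, 0 ≤ rho i t)
    (hEta : ∀ l, ∀ k ∈ A l, 0 < etaHat M σ2 A β u w rho l k) :
    let rhatstar : Fin L → Fin K → ℝ := fun l k =>
      min (Real.sqrt ((M : ℝ) * (K : ℝ)) * rho l k * u l k * w l k * β l k l /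
            etaHat M σ2 A β u w rho l k)
          (Real.sqrt (Pm l k))
    (∀ l, ∀ k ∈ A l, 0 ≤ rhatstar l k ∧ rhatstar l k ≤ Real.sqrt (Pm l k)) ∧
    ∀ rhat : Fin L → Fin K → ℝ,
      (∀ l, ∀ k ∈ A l, 0 ≤ rhat l k ∧ rhat l k ≤ Real.sqrt (Pm l k)) →
      (∑ l, ∑ k ∈ A l, w l k * eMSE M σ2 A β (u l k) rhatstar rho l k) ≤
        ∑ l, ∑ k ∈ A l, w l k * eMSE M σ2 A β (u l k) rhat rho l k := by
  intro rhatstar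
  have hcnn : ∀ l k, 0 ≤ Real.sqrt ((M : ℝ) * (K : ℝ)) * rho l k * u l k * w l k * β l k l :=
    fun l k => mul_nonneg (mul_nonneg (mul_nonneg (mul_nonneg (Real.sqrt_nonneg _) (hrho l k)) (hu l k)) (hw l k)) (hβ l k l)
  constructor
  · intro l k hk
    refine ⟨le_min (div_nonneg (hcnn l k) (hEta l k hk).le) (Real.sqrt_nonneg _),
      min_le_right _ _⟩
  · intro rhat hbox
    rw [sum_identity, sum_identity]
    refine add_le_add (Finset.sum_le_sum fun l _ => Finset.sum_le_sum fun k hk => ?_) le_rfl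
    exact quad_min _ _ _ _ (hEta l k hk) (hcnn l k) (Real.sqrt_nonneg _)
      (hbox l k hk).1 (hbox l k hk).2
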